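/- Let 0 < α < 1/M, β > 0 and d ∈ ℝ^N with d_m > 0 for all m. If x ∈ ℝ^N is a fixed point of the reference dynamical system, i.e. x = F(x) − β d, then, setting μ₀ = 1/(1 + Σ_{n=1}^N exp(x_n)), each component satisfies x_m = log( α / ( α·exp(β d_m) + (1 − αM)·(exp(β d_m) − 1)·μ₀ ) ). -/

import Mathlib

/-- The αβ-HMM log-belief-ratio mapping `F`, defined componentwise for `m = 1, …, M-1` by
`F_m(x) = log(((1 - αM)·exp(x_m) + α + α·Σ_n exp(x_n)) / (1 - αM + α + α·Σ_n exp(x_n)))`. -/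
noncomputable def abHMM.F (α : ℝ) (M : ℕ) (x : Fin (M - 1) → ℝ) : Fin (M - 1) → ℝ :=
  fun m => Real.log (((1 - α * M) * Real.exp (x m) + α + α * ∑ n, Real.exp (x n)) /
    (1 - α * M + α + α * ∑ n, Real.exp (x n)))

/-- if `x` is a fixed point of the reference dynamical system
`x = F(x) - β d`, then with `μ₀ = 1/(1 + Σ_n exp(x_n))` each component satisfies
`x_m = log(α / (α·exp(β d_m) + (1 - αM)·(exp(β d_m) - 1)·μ₀))`. -/
theorem abHMM_fixed_point_formula (M : ℕ) (hM : 2 ≤ M) (α β : ℝ)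
    (hα : 0 < α) (hα' : α < 1 / M) (hβ : 0 < β)
    (d : Fin (M - 1) → ℝ) (hd : ∀ m, 0 < d m)
    (x : Fin (M - 1) → ℝ) (hfix : x = fun m => abHMM.F α M x m - β * d m)
    (μ₀ : ℝ) (hμ₀ : μ₀ = 1 / (1 + ∑ n, Real.exp (x n))) :
    ∀ m, x m = Real.log (α /
      (α * Real.exp (β * d m) + (1 - α * M) * (Real.exp (β * d m) - 1) * μ₀)) := by
  intro m
  set S : ℝ := ∑ n, Real.exp (x n) with hS
  have hMpos : (0:ℝ) < M := by
    have : (2:ℝ) ≤ M := by exact_mod_cast hM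
    linarith
  have hαM : α * M < 1 := (lt_div_iff₀ hMpos).mp hα'
  have hSnonneg : 0 ≤ S := Finset.sum_nonneg fun _ _ => (Real.exp_pos _).le
  have hαS : 0 ≤ α * S := mul_nonneg hα.le hSnonneg
  have hT : 0 < 1 - α * M + α + α * S := by linarith
  have hE : 0 < Real.exp (x m) := Real.exp_pos _
  have hN : 0 < (1 - α * M) * Real.exp (x m) + α + α * S := by nlinarith
  have hx : x m = Real.log (((1 - α * M) * Real.exp (x m) + α + α * S) /
      (1 - α * M + α + α * S)) - β * d m := by
    conv_lhs => rw [hfix]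
    rfl
  have hD : 1 < Real.exp (β * d m) := Real.one_lt_exp_iff.mpr (mul_pos hβ (hd m))
  set D : ℝ := Real.exp (β * d m) with hDdef
  have key : Real.exp (x m) * ((1 - α * M + α + α * S) * D) =
      (1 - α * M) * Real.exp (x m) + α + α * S := by
    have h := congrArg Real.exp hx
    rw [Real.exp_sub, Real.exp_log (div_pos hN hT), div_div,
      eq_div_iff (mul_pos hT (Real.exp_pos _)).ne'] at h
    exact h
  have hdenom : 0 < α * D * (1 + S) + (1 - α * M) * (D - 1) := by nlinarith
  have h1S : (0:ℝ) < 1 + S := by linarith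
  have hQ : α / (α * D + (1 - α * M) * (D - 1) * μ₀) = Real.exp (x m) := by
    rw [hμ₀]
    rw [div_eq_iff]
    · field_simp
      nlinarith [key]
      
    · rw [show α * D + (1 - α * M) * (D - 1) * (1 / (1 + S)) =
        (α * D * (1 + S) + (1 - α * M) * (D - 1)) / (1 + S) by field_simp]
      exact (div_pos hdenom h1S).ne'
  rw [hQ, Real.log_exp]
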